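/- arXiv:1610.09266 — 4 statements merged into one kernel-verified Lean document; each statement's English description precedes it below -/
import Mathlib

section
/- Let r ≥ 1, n+1 = 2^r, and let α_1,…,α_{n+1} be an enumeration of all sign vectors in {−1,1}^r ⊂ ℝ^r. Then the image of the unit sphere of ℂ^{n+1} under the map z ↦ (1/2) Σ_{j=1}^{n+1} |z_j|² α_j is exactly the hypercube {x ∈ ℝ^r : |x_i| ≤ 1/2 for every i}. In other words, the image of the moment map μ_T of the Hamiltonian T^r-action on ℙ_n is the full hypercube Δ. -/
open scoped BigOperators

set_option maxHeartbeats 1000000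

/-- Sum over all Boolean vectors of a product factors as a product of binary sums. -/
lemma sum_prod_bool_aux (r : ℕ) (f : Fin r → Bool → ℝ) :
    ∑ b : Fin r → Bool, ∏ i, f i (b i) = ∏ i, (f i true + f i false) := by
  have h := Finset.prod_univ_sum (fun _ : Fin r => (Finset.univ : Finset Bool)) f
  simp only [Fintype.piFinset_univ, Fintype.sum_bool] at h
  exact h.symm

/-- Let `n+1 = 2^r` and let `α_1, …, α_{n+1}` enumerate all sign vectors in `{-1,1}^r ⊆ ℝ^r`.
The image of the unit sphere of `ℂ^{n+1}` under `z ↦ (1/2) ∑_j |z_j|² α_j` is exactly the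
hypercube `{x ∈ ℝ^r : |x i| ≤ 1/2}`, i.e. the image of the moment map `μ_T` of the
Hamiltonian `T^r`-action on `ℙ_n` is the full hypercube Δ. -/
theorem moment_map_image_eq_hypercube (r n : ℕ) (hr : 1 ≤ r) (hn : n + 1 = 2 ^ r)
    (α : Fin (n + 1) → (Fin r → ℝ)) (hinj : Function.Injective α)
    (hrange : Set.range α = {v : Fin r → ℝ | ∀ i, v i = 1 ∨ v i = -1}) :
    {x : Fin r → ℝ | ∃ z : Fin (n + 1) → ℂ, (∑ j, ‖z j‖ ^ 2) = 1 ∧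
        ∀ i, x i = (1/2) * ∑ j, ‖z j‖ ^ 2 * α j i} =
      {x : Fin r → ℝ | ∀ i, |x i| ≤ 1/2} := by
  have hα : ∀ j i, α j i = 1 ∨ α j i = -1 := by
    intro j i
    have : α j ∈ Set.range α := ⟨j, rfl⟩
    rw [hrange] at this
    exact this i
  ext x
  simp only [Set.mem_setOf_eq]
  constructor
  · rintro ⟨z, hz, hx⟩ i
    rw [hx i, abs_mul, abs_of_nonneg (by norm_num : (0:ℝ) ≤ 1/2)]
    have h1 : |∑ j, ‖z j‖ ^ 2 * α j i| ≤ 1 := by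
      calc |∑ j, ‖z j‖ ^ 2 * α j i| ≤ ∑ j, |‖z j‖ ^ 2 * α j i| :=
            Finset.abs_sum_le_sum_abs _ _
        _ = ∑ j, ‖z j‖ ^ 2 := by
            refine Finset.sum_congr rfl fun j _ => ?_
            rcases hα j i with h | h <;>
              simp [h, abs_of_nonneg (sq_nonneg ‖z j‖)]
        _ = 1 := hz
    linarith
  · intro hx
    -- encode sign vectors by Boolean vectors
    set e : (Fin r → Bool) → (Fin r → ℝ) := fun b i => if b i then 1 else -1 with he
    have he_inj : Function.Injective e := by
      intro b b' h
      funext i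
      have := congrFun h i
      simp only [he] at this
      cases hb : b i <;> cases hb' : b' i <;> simp [hb, hb'] at this ⊢ <;> norm_num at this
    have he_mem : ∀ b, e b ∈ Set.range α := by
      intro b
      rw [hrange]
      intro i
      by_cases h : b i <;> simp [he, h]
    -- choose σ with α (σ b) = e b
    choose σ hσ using fun b => he_mem b
    have hσ_inj : Function.Injective σ := by
      intro b b' h
      apply he_inj
      rw [← hσ b, ← hσ b', h]
    have hcard : Fintype.card (Fin r → Bool) = Fintype.card (Fin (n + 1)) := by
      simp [hn]
    have hσ_bij : Function.Bijective σ :=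
      (Fintype.bijective_iff_injective_and_card σ).2 ⟨hσ_inj, hcard⟩
    -- weights
    set W : Fin (n + 1) → ℝ := fun j => ∏ i, (1/2 + x i * α j i) with hW
    have hWnonneg : ∀ j, 0 ≤ W j := by
      intro j
      apply Finset.prod_nonneg
      intro i _
      rcases hα j i with h | h <;>
        · have := hx i
          rw [abs_le] at this
          rw [h]; linarith [this.1, this.2]
    set f : Fin r → Bool → ℝ := fun i c => 1/2 + x i * (if c then 1 else -1) with hfdef
    refine ⟨fun j => (Real.sqrt (W j) : ℂ), ?_, ?_⟩
    · have hnorm : ∀ j, ‖((Real.sqrt (W j) : ℝ) : ℂ)‖ ^ 2 = W j := by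
        intro j
        rw [Complex.norm_real, Real.norm_eq_abs, abs_of_nonneg (Real.sqrt_nonneg _),
          Real.sq_sqrt (hWnonneg j)]
      have hf : ∀ b : Fin r → Bool, W (σ b) = ∏ i, f i (b i) := by
        intro b
        simp only [hW, hfdef]
        refine Finset.prod_congr rfl fun i _ => ?_
        rw [hσ b]
        try simp [he]
      calc ∑ j, ‖((Real.sqrt (W j) : ℝ) : ℂ)‖ ^ 2 = ∑ j, W j :=
            Finset.sum_congr rfl fun j _ => hnorm j
        _ = ∑ b : Fin r → Bool, W (σ b) := (Fintype.sum_bijective σ hσ_bij _ _ fun b => rfl).symm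
        _ = ∑ b : Fin r → Bool, ∏ i, f i (b i) := Finset.sum_congr rfl fun b _ => hf b
        _ = ∏ i, (f i true + f i false) := sum_prod_bool_aux r f
        _ = ∏ i, (1 : ℝ) := by
            refine Finset.prod_congr rfl fun i _ => ?_
            simp only [hfdef]
            norm_num
            ring
        _ = 1 := Finset.prod_const_one
    · intro i₀
      have hnorm : ∀ j, ‖((Real.sqrt (W j) : ℝ) : ℂ)‖ ^ 2 = W j := by
        intro j
        rw [Complex.norm_real, Real.norm_eq_abs, abs_of_nonneg (Real.sqrt_nonneg _),
          Real.sq_sqrt (hWnonneg j)]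
      set g : Fin r → Bool → ℝ := fun i c =>
        f i c * (if i = i₀ then (if c then 1 else -1) else 1) with hgdef
      have hg : ∀ b : Fin r → Bool, W (σ b) * α (σ b) i₀ = ∏ i, g i (b i) := by
        intro b
        have h1 : ∏ i, g i (b i) =
            (∏ i, f i (b i)) * ∏ i, (if i = i₀ then (if b i then (1:ℝ) else -1) else 1) := by
          rw [← Finset.prod_mul_distrib]
        have h2 : ∏ i, (if i = i₀ then (if b i then (1:ℝ) else -1) else 1) =
            (if b i₀ then (1:ℝ) else -1) := by
          rw [Finset.prod_eq_single i₀]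
          · simp
          · intro c _ hc; simp [hc]
          · intro h; exact absurd (Finset.mem_univ i₀) h
        have h3 : α (σ b) i₀ = (if b i₀ then (1:ℝ) else -1) := by
          rw [hσ b]
        rw [h1, h2, h3]
        congr 1
        · simp only [hW, hfdef]
          refine Finset.prod_congr rfl fun i _ => ?_
          rw [hσ b]
          try simp [he]
      have key : ∑ j, W j * α j i₀ = 2 * x i₀ := by
        calc ∑ j, W j * α j i₀ = ∑ b : Fin r → Bool, W (σ b) * α (σ b) i₀ :=
              (Fintype.sum_bijective σ hσ_bij _ _ fun b => rfl).symm
          _ = ∑ b : Fin r → Bool, ∏ i, g i (b i) := Finset.sum_congr rfl fun b _ => hg b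
          _ = ∏ i, (g i true + g i false) := sum_prod_bool_aux r g
          _ = ∏ i, (if i = i₀ then 2 * x i else 1) := by
              refine Finset.prod_congr rfl fun i _ => ?_
              by_cases h : i = i₀ <;> simp [hgdef, hfdef, h] <;> try ring
          _ = 2 * x i₀ := by
              rw [Finset.prod_eq_single i₀]
              · simp
              · intro c _ hc; simp [hc]
              · intro h; exact absurd (Finset.mem_univ i₀) h
      have : ∑ j, ‖((Real.sqrt (W j) : ℝ) : ℂ)‖ ^ 2 * α j i₀ = 2 * x i₀ := by
        rw [← key]
        exact Finset.sum_congr rfl fun j _ => by rw [hnorm j]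
      rw [this]
      ring
end

section
/- In the polynomial ring ℂ[θ_1,θ_2,θ_3,ω], let χ_1,…,χ_8 be the eight linear forms ±θ_1±θ_2±θ_3 (all sign combinations). Then σ_1(χ•) ω⁷ + σ_3(χ•) ω⁵ + σ_4(χ•) ω⁴ + σ_7(χ•) ω = 2 ( 3σ_1(θ)⁴ − 12 σ_2(θ) σ_1(θ)² + 8 σ_3(θ) σ_1(θ) + 8 σ_2(θ)² ) ω⁴; equivalently (since the odd elementary symmetric polynomials of χ_1,…,χ_8 vanish), σ_4(χ•) = 2(3σ_1⁴ − 12σ_1²σ_2 + 8σ_1σ_3 + 8σ_2²). (This is the generator Q̃^S_{+,3} of the kernel ideal for the three-qubit case r = 3.) -/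
open MvPolynomial

/-- `θ_1` in `ℂ[θ_1,θ_2,θ_3,ω]`. -/
noncomputable def θ₁ : MvPolynomial (Fin 4) ℂ := X 0
/-- `θ_2` in `ℂ[θ_1,θ_2,θ_3,ω]`. -/
noncomputable def θ₂ : MvPolynomial (Fin 4) ℂ := X 1
/-- `θ_3` in `ℂ[θ_1,θ_2,θ_3,ω]`. -/
noncomputable def θ₃ : MvPolynomial (Fin 4) ℂ := X 2
/-- `ω` in `ℂ[θ_1,θ_2,θ_3,ω]`. -/
noncomputable def w : MvPolynomial (Fin 4) ℂ := X 3

/-- The multiset of the eight linear forms `±θ_1 ± θ_2 ± θ_3` (all sign combinations),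
the additive characters of the `T³`-action on `ℙ_7`. -/
noncomputable def χs : Multiset (MvPolynomial (Fin 4) ℂ) :=
  {θ₁ + θ₂ + θ₃, θ₁ + θ₂ - θ₃, θ₁ - θ₂ + θ₃, -θ₁ + θ₂ + θ₃,
   θ₁ - θ₂ - θ₃, -θ₁ + θ₂ - θ₃, -θ₁ - θ₂ + θ₃, -θ₁ - θ₂ - θ₃}

/-- `σ_1(θ) = θ_1 + θ_2 + θ_3`. -/
noncomputable def s₁ : MvPolynomial (Fin 4) ℂ := θ₁ + θ₂ + θ₃
/-- `σ_2(θ) = θ_1θ_2 + θ_1θ_3 + θ_2θ_3`. -/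
noncomputable def s₂ : MvPolynomial (Fin 4) ℂ := θ₁ * θ₂ + θ₁ * θ₃ + θ₂ * θ₃
/-- `σ_3(θ) = θ_1θ_2θ_3`. -/
noncomputable def s₃ : MvPolynomial (Fin 4) ℂ := θ₁ * θ₂ * θ₃

/-- Elementary symmetric polynomials of a multiset given as a list, via `sublistsLen`. -/
lemma esymm_coe {R : Type*} [CommSemiring R] (l : List R) (n : ℕ) :
    (↑l : Multiset R).esymm n = ((l.sublistsLen n).map List.prod).sum := by
  simp [Multiset.esymm, Multiset.powersetCard_coe', Multiset.powersetCardAux_eq_map_coe,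
    List.map_map]
  congr 1

/-- `χs` as (the coercion of) an explicit list. -/
lemma χs_eq : χs = (↑[θ₁ + θ₂ + θ₃, θ₁ + θ₂ - θ₃, θ₁ - θ₂ + θ₃, -θ₁ + θ₂ + θ₃,
    θ₁ - θ₂ - θ₃, -θ₁ + θ₂ - θ₃, -θ₁ - θ₂ + θ₃, -θ₁ - θ₂ - θ₃] : Multiset _) := rfl

lemma chi_esymm_one : χs.esymm 1 = 0 := by
  rw [χs_eq, esymm_coe]
  simp only [List.sublistsLen_succ_cons, List.sublistsLen_succ_nil, List.sublistsLen_zero,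
    List.map_append, List.map_cons, List.map_nil, List.sum_append, List.sum_cons, List.sum_nil,
    List.prod_cons, List.prod_nil, List.append_nil, List.nil_append, List.cons_append]
  ring

lemma esymm_three : χs.esymm 3 = 0 := by
  rw [χs_eq, esymm_coe]
  simp only [List.sublistsLen_succ_cons, List.sublistsLen_succ_nil, List.sublistsLen_zero,
    List.map_append, List.map_cons, List.map_nil, List.sum_append, List.sum_cons, List.sum_nil,
    List.prod_cons, List.prod_nil, List.append_nil, List.nil_append, List.cons_append]
  ring

lemma esymm_seven : χs.esymm 7 = 0 := by
  rw [χs_eq, esymm_coe]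
  simp only [List.sublistsLen_succ_cons, List.sublistsLen_succ_nil, List.sublistsLen_zero,
    List.map_append, List.map_cons, List.map_nil, List.sum_append, List.sum_cons, List.sum_nil,
    List.prod_cons, List.prod_nil, List.append_nil, List.nil_append, List.cons_append]
  ring

set_option maxHeartbeats 1000000 in
lemma esymm_four : χs.esymm 4 =
    2 * (3 * s₁ ^ 4 - 12 * s₁ ^ 2 * s₂ + 8 * s₁ * s₃ + 8 * s₂ ^ 2) := by
  rw [χs_eq, esymm_coe]
  simp only [s₁, s₂, s₃, List.sublistsLen_succ_cons, List.sublistsLen_succ_nil,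
    List.sublistsLen_zero, List.map_append, List.map_cons, List.map_nil, List.sum_append,
    List.sum_cons, List.sum_nil, List.prod_cons, List.prod_nil, List.append_nil,
    List.nil_append, List.cons_append]
  ring

/-- Three-qubit kernel generator `Q̃^S_{+,3}`:
`σ_1(χ•) ω⁷ + σ_3(χ•) ω⁵ + σ_4(χ•) ω⁴ + σ_7(χ•) ω
  = 2 (3σ_1⁴ - 12 σ_2 σ_1² + 8 σ_3 σ_1 + 8 σ_2²) ω⁴`;
equivalently `σ_4(χ•) = 2(3σ_1⁴ - 12σ_1²σ_2 + 8σ_1σ_3 + 8σ_2²)`. -/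
theorem three_qubit_kernel_generator_plus_three :
    (χs.esymm 1 * w ^ 7 + χs.esymm 3 * w ^ 5 + χs.esymm 4 * w ^ 4 + χs.esymm 7 * w =
      2 * (3 * s₁ ^ 4 - 12 * s₂ * s₁ ^ 2 + 8 * s₃ * s₁ + 8 * s₂ ^ 2) * w ^ 4) ∧
    χs.esymm 4 = 2 * (3 * s₁ ^ 4 - 12 * s₁ ^ 2 * s₂ + 8 * s₁ * s₃ + 8 * s₂ ^ 2) := by
  refine ⟨?_, esymm_four⟩
  rw [chi_esymm_one, esymm_three, esymm_seven, esymm_four]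
  ring
end

section
/- In the polynomial ring ℂ[θ_1,θ_2,θ_3,ω], let χ_1,…,χ_8 be the eight linear forms ±θ_1±θ_2±θ_3 (all sign combinations). Writing σ_i for the elementary symmetric polynomials σ_i(θ_1,θ_2,θ_3), one has the identity σ_4(χ•) ω⁴ + σ_6(χ•) ω² + σ_7(χ•) ω + σ_8(χ•) = −4σ_1⁶(2σ_2+ω²) − 32σ_3σ_1³(2σ_2+ω²) + 16σ_3σ_1ω²(4σ_2+ω²) + 16ω²(σ_2²ω² − 4σ_3²) + 2σ_1⁴(12σ_2ω² + 8σ_2² + 3ω⁴) − 8σ_1²(3σ_2ω⁴ + 4σ_2²ω² − 8σ_3²) + σ_1⁸ + 16σ_3σ_1⁵. (This is the generator Q̃^S_{−,1} of the kernel ideal for the three-qubit case r = 3.) -/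
open MvPolynomial

theorem esymm_cons {R : Type*} [CommRing R] (a : R) (s : Multiset R) (n : ℕ) :
    (a ::ₘ s).esymm (n+1) = a * s.esymm n + s.esymm (n+1) := by
  simp only [Multiset.esymm, Multiset.powersetCard_cons, Multiset.map_add, Multiset.map_map,
    Function.comp, Multiset.prod_cons, Multiset.sum_add, Multiset.sum_map_mul_left]
  ring

theorem esymm_nil {R : Type*} [CommRing R] (n : ℕ) :
    (0 : Multiset R).esymm (n+1) = 0 := by
  simp [Multiset.esymm, Multiset.powersetCard_zero_left, Multiset.powersetCard_zero_right]

theorem esymm_zero' {R : Type*} [CommRing R] (s : Multiset R) : s.esymm 0 = 1 := by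
  simp [Multiset.esymm]

theorem esymm_cons1 {R : Type*} [CommRing R] (a : R) (s : Multiset R) :
    (a ::ₘ s).esymm 1 = a * s.esymm 0 + s.esymm 1 := esymm_cons a s 0

theorem esymm_nil1 {R : Type*} [CommRing R] : (0 : Multiset R).esymm 1 = 0 := esymm_nil 0

theorem esymm_cons2 {R : Type*} [CommRing R] (a : R) (s : Multiset R) :
    (a ::ₘ s).esymm 2 = a * s.esymm 1 + s.esymm 2 := esymm_cons a s 1

theorem esymm_nil2 {R : Type*} [CommRing R] : (0 : Multiset R).esymm 2 = 0 := esymm_nil 1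

theorem esymm_cons3 {R : Type*} [CommRing R] (a : R) (s : Multiset R) :
    (a ::ₘ s).esymm 3 = a * s.esymm 2 + s.esymm 3 := esymm_cons a s 2

theorem esymm_nil3 {R : Type*} [CommRing R] : (0 : Multiset R).esymm 3 = 0 := esymm_nil 2

theorem esymm_cons4 {R : Type*} [CommRing R] (a : R) (s : Multiset R) :
    (a ::ₘ s).esymm 4 = a * s.esymm 3 + s.esymm 4 := esymm_cons a s 3

theorem esymm_nil4 {R : Type*} [CommRing R] : (0 : Multiset R).esymm 4 = 0 := esymm_nil 3

theorem esymm_cons5 {R : Type*} [CommRing R] (a : R) (s : Multiset R) :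
    (a ::ₘ s).esymm 5 = a * s.esymm 4 + s.esymm 5 := esymm_cons a s 4

theorem esymm_nil5 {R : Type*} [CommRing R] : (0 : Multiset R).esymm 5 = 0 := esymm_nil 4

theorem esymm_cons6 {R : Type*} [CommRing R] (a : R) (s : Multiset R) :
    (a ::ₘ s).esymm 6 = a * s.esymm 5 + s.esymm 6 := esymm_cons a s 5

theorem esymm_nil6 {R : Type*} [CommRing R] : (0 : Multiset R).esymm 6 = 0 := esymm_nil 5

theorem esymm_cons7 {R : Type*} [CommRing R] (a : R) (s : Multiset R) :
    (a ::ₘ s).esymm 7 = a * s.esymm 6 + s.esymm 7 := esymm_cons a s 6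

theorem esymm_nil7 {R : Type*} [CommRing R] : (0 : Multiset R).esymm 7 = 0 := esymm_nil 6

theorem esymm_cons8 {R : Type*} [CommRing R] (a : R) (s : Multiset R) :
    (a ::ₘ s).esymm 8 = a * s.esymm 7 + s.esymm 8 := esymm_cons a s 7

theorem esymm_nil8 {R : Type*} [CommRing R] : (0 : Multiset R).esymm 8 = 0 := esymm_nil 7

set_option maxHeartbeats 4000000 in
set_option maxRecDepth 10000 in
theorem aux {R : Type*} [CommRing R] (a b c t : R) :
    ({a+b+c, a+b-c, a-b+c, -a+b+c, a-b-c, -a+b-c, -a-b+c, -a-b-c} : Multiset R).esymm 4 * t^4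
      + ({a+b+c, a+b-c, a-b+c, -a+b+c, a-b-c, -a+b-c, -a-b+c, -a-b-c} : Multiset R).esymm 6 * t^2
      + ({a+b+c, a+b-c, a-b+c, -a+b+c, a-b-c, -a+b-c, -a-b+c, -a-b-c} : Multiset R).esymm 7 * t
      + ({a+b+c, a+b-c, a-b+c, -a+b+c, a-b-c, -a+b-c, -a-b+c, -a-b-c} : Multiset R).esymm 8 =
      -4 * (a+b+c) ^ 6 * (2 * (a*b+a*c+b*c) + t ^ 2) - 32 * (a*b*c) * (a+b+c) ^ 3 * (2 * (a*b+a*c+b*c) + t ^ 2) +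
        16 * (a*b*c) * (a+b+c) * t ^ 2 * (4 * (a*b+a*c+b*c) + t ^ 2) +
        16 * t ^ 2 * ((a*b+a*c+b*c) ^ 2 * t ^ 2 - 4 * (a*b*c) ^ 2) +
        2 * (a+b+c) ^ 4 * (12 * (a*b+a*c+b*c) * t ^ 2 + 8 * (a*b+a*c+b*c) ^ 2 + 3 * t ^ 4) -
        8 * (a+b+c) ^ 2 * (3 * (a*b+a*c+b*c) * t ^ 4 + 4 * (a*b+a*c+b*c) ^ 2 * t ^ 2 - 8 * (a*b*c) ^ 2) +
        (a+b+c) ^ 8 + 16 * (a*b*c) * (a+b+c) ^ 5 := by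
  simp only [Multiset.insert_eq_cons, ← Multiset.cons_zero,
    esymm_cons8, esymm_cons7, esymm_cons6, esymm_cons5, esymm_cons4, esymm_cons3,
    esymm_cons2, esymm_cons1, esymm_nil8, esymm_nil7, esymm_nil6, esymm_nil5,
    esymm_nil4, esymm_nil3, esymm_nil2, esymm_nil1, esymm_zero']
  ring

/-- Three-qubit kernel generator `Q̃^S_{-,1}`:
`σ_4(χ•) ω⁴ + σ_6(χ•) ω² + σ_7(χ•) ω + σ_8(χ•)
  = -4σ_1⁶(2σ_2+ω²) - 32σ_3σ_1³(2σ_2+ω²) + 16σ_3σ_1ω²(4σ_2+ω²) + 16ω²(σ_2²ω² - 4σ_3²)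
    + 2σ_1⁴(12σ_2ω² + 8σ_2² + 3ω⁴) - 8σ_1²(3σ_2ω⁴ + 4σ_2²ω² - 8σ_3²) + σ_1⁸ + 16σ_3σ_1⁵`. -/
theorem three_qubit_kernel_generator_minus_one :
    χs.esymm 4 * w ^ 4 + χs.esymm 6 * w ^ 2 + χs.esymm 7 * w + χs.esymm 8 =
      -4 * s₁ ^ 6 * (2 * s₂ + w ^ 2) - 32 * s₃ * s₁ ^ 3 * (2 * s₂ + w ^ 2) +
        16 * s₃ * s₁ * w ^ 2 * (4 * s₂ + w ^ 2) +
        16 * w ^ 2 * (s₂ ^ 2 * w ^ 2 - 4 * s₃ ^ 2) +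
        2 * s₁ ^ 4 * (12 * s₂ * w ^ 2 + 8 * s₂ ^ 2 + 3 * w ^ 4) -
        8 * s₁ ^ 2 * (3 * s₂ * w ^ 4 + 4 * s₂ ^ 2 * w ^ 2 - 8 * s₃ ^ 2) +
        s₁ ^ 8 + 16 * s₃ * s₁ ^ 5 := by
  unfold χs s₁ s₂ s₃
  exact aux θ₁ θ₂ θ₃ w
end

section
/- In the polynomial ring ℂ[θ_1,θ_2,θ_3,ω], let χ_1,…,χ_8 be the eight linear forms ±θ_1±θ_2±θ_3 (all sign combinations). Writing σ_i for the elementary symmetric polynomials σ_i(θ_1,θ_2,θ_3), one has the identity σ_2(χ•) ω⁶ + σ_5(χ•) ω³ + σ_6(χ•) ω² + σ_8(χ•) = −4σ_1⁶(2σ_2+ω²) + 8σ_2σ_1⁴(2σ_2+3ω²) − 32σ_3σ_1³(2σ_2+ω²) + 64σ_2σ_3σ_1ω² − 4σ_1²(8σ_2²ω² − 16σ_3² + ω⁶) + 8ω²(σ_2ω⁴ − 8σ_3²) + σ_1⁸ + 16σ_3σ_1⁵. (This is the generator Q̃^S_{−,3} of the kernel ideal for the three-qubit case r = 3.) -/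
open MvPolynomial

private lemma pc1 {α : Type*} (a : α) : Multiset.powersetCard 1 {a} = {{a}} := rfl
private lemma pc2 {α : Type*} (a : α) : Multiset.powersetCard 2 {a} = 0 := rfl
private lemma pc3 {α : Type*} (a : α) : Multiset.powersetCard 3 {a} = 0 := rfl
private lemma pc4 {α : Type*} (a : α) : Multiset.powersetCard 4 {a} = 0 := rfl
private lemma pc5 {α : Type*} (a : α) : Multiset.powersetCard 5 {a} = 0 := rfl
private lemma pc6 {α : Type*} (a : α) : Multiset.powersetCard 6 {a} = 0 := rfl
private lemma pc7 {α : Type*} (a : α) : Multiset.powersetCard 7 {a} = 0 := rfl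
private lemma pc8 {α : Type*} (a : α) : Multiset.powersetCard 8 {a} = 0 := rfl

set_option maxHeartbeats 1000000 in
private lemma e2 : χs.esymm 2 = -4 * s₁ ^ 2 + 8 * s₂ := by
  simp only [χs, s₁, s₂, s₃, Multiset.insert_eq_cons, Multiset.esymm, Multiset.powersetCard_cons,
    Multiset.powersetCard_zero_left, pc1, pc2, pc3, pc4, pc5, pc6, pc7, pc8,
    Multiset.map_add, Multiset.map_map, Multiset.map_singleton, Multiset.map_cons,
    Multiset.map_zero, Multiset.sum_add, Multiset.sum_cons, Multiset.sum_singleton,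
    Multiset.sum_zero, Multiset.prod_cons, Multiset.prod_singleton, Multiset.prod_zero,
    Function.comp, Nat.reduceAdd]
  ring

set_option maxHeartbeats 1000000 in
private lemma e5 : χs.esymm 5 = 0 := by
  simp only [χs, s₁, s₂, s₃, Multiset.insert_eq_cons, Multiset.esymm, Multiset.powersetCard_cons,
    Multiset.powersetCard_zero_left, pc1, pc2, pc3, pc4, pc5, pc6, pc7, pc8,
    Multiset.map_add, Multiset.map_map, Multiset.map_singleton, Multiset.map_cons,
    Multiset.map_zero, Multiset.sum_add, Multiset.sum_cons, Multiset.sum_singleton,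
    Multiset.sum_zero, Multiset.prod_cons, Multiset.prod_singleton, Multiset.prod_zero,
    Function.comp, Nat.reduceAdd]
  ring

set_option maxHeartbeats 2000000 in
private lemma e6 : χs.esymm 6 = -4 * s₁ ^ 6 + 24 * s₁ ^ 4 * s₂ - 32 * s₁ ^ 3 * s₃ -
    32 * s₁ ^ 2 * s₂ ^ 2 + 64 * s₁ * s₂ * s₃ - 64 * s₃ ^ 2 := by
  simp only [χs, s₁, s₂, s₃, Multiset.insert_eq_cons, Multiset.esymm, Multiset.powersetCard_cons,
    Multiset.powersetCard_zero_left, pc1, pc2, pc3, pc4, pc5, pc6, pc7, pc8,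
    Multiset.map_add, Multiset.map_map, Multiset.map_singleton, Multiset.map_cons,
    Multiset.map_zero, Multiset.sum_add, Multiset.sum_cons, Multiset.sum_singleton,
    Multiset.sum_zero, Multiset.prod_cons, Multiset.prod_singleton, Multiset.prod_zero,
    Function.comp, Nat.reduceAdd]
  ring

set_option maxHeartbeats 2000000 in
private lemma e8 : χs.esymm 8 = s₁ ^ 8 - 8 * s₁ ^ 6 * s₂ + 16 * s₁ ^ 5 * s₃ +
    16 * s₁ ^ 4 * s₂ ^ 2 - 64 * s₁ ^ 3 * s₂ * s₃ + 64 * s₁ ^ 2 * s₃ ^ 2 := by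
  simp only [χs, s₁, s₂, s₃, Multiset.insert_eq_cons, Multiset.esymm, Multiset.powersetCard_cons,
    Multiset.powersetCard_zero_left, pc1, pc2, pc3, pc4, pc5, pc6, pc7, pc8,
    Multiset.map_add, Multiset.map_map, Multiset.map_singleton, Multiset.map_cons,
    Multiset.map_zero, Multiset.sum_add, Multiset.sum_cons, Multiset.sum_singleton,
    Multiset.sum_zero, Multiset.prod_cons, Multiset.prod_singleton, Multiset.prod_zero,
    Function.comp, Nat.reduceAdd]
  ring

/-- Three-qubit kernel generator `Q̃^S_{-,3}`:
`σ_2(χ•) ω⁶ + σ_5(χ•) ω³ + σ_6(χ•) ω² + σ_8(χ•)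
  = -4σ_1⁶(2σ_2+ω²) + 8σ_2σ_1⁴(2σ_2+3ω²) - 32σ_3σ_1³(2σ_2+ω²) + 64σ_2σ_3σ_1ω²
    - 4σ_1²(8σ_2²ω² - 16σ_3² + ω⁶) + 8ω²(σ_2ω⁴ - 8σ_3²) + σ_1⁸ + 16σ_3σ_1⁵`. -/
theorem three_qubit_kernel_generator_minus_three :
    χs.esymm 2 * w ^ 6 + χs.esymm 5 * w ^ 3 + χs.esymm 6 * w ^ 2 + χs.esymm 8 =
      -4 * s₁ ^ 6 * (2 * s₂ + w ^ 2) + 8 * s₂ * s₁ ^ 4 * (2 * s₂ + 3 * w ^ 2) -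
        32 * s₃ * s₁ ^ 3 * (2 * s₂ + w ^ 2) + 64 * s₂ * s₃ * s₁ * w ^ 2 -
        4 * s₁ ^ 2 * (8 * s₂ ^ 2 * w ^ 2 - 16 * s₃ ^ 2 + w ^ 6) +
        8 * w ^ 2 * (s₂ * w ^ 4 - 8 * s₃ ^ 2) +
        s₁ ^ 8 + 16 * s₃ * s₁ ^ 5 := by
  rw [e2, e5, e6, e8]
  ring
end
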